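/- Assume 2 is a non-zero-divisor in k. Then the center of R equals the k-subalgebra of R generated by x₁² and x₂². -/

import Mathlib

/-- The anticommutation relation `x₁x₂ + x₂x₁ = 0` on the free `k`-algebra
on two generators. -/
inductive OddRel (k : Type*) [CommRing k] :
    FreeAlgebra k (Fin 2) → FreeAlgebra k (Fin 2) → Prop
  | anticomm : OddRel k
      (FreeAlgebra.ι k (0 : Fin 2) * FreeAlgebra.ι k (1 : Fin 2) +
        FreeAlgebra.ι k (1 : Fin 2) * FreeAlgebra.ι k (0 : Fin 2)) 0

/-- The `k`-algebra of skew polynomials in two variables,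
`R = k⟨x₁,x₂⟩/(x₁x₂ + x₂x₁)`. -/
abbrev OddPoly (k : Type*) [CommRing k] := RingQuot (OddRel k)

/-- The generators `x₁ = X k 0` and `x₂ = X k 1` of `R`. -/
noncomputable def X (k : Type*) [CommRing k] (i : Fin 2) : OddPoly k :=
  RingQuot.mkAlgHom k (OddRel k) (FreeAlgebra.ι k i)

namespace OddAux

variable (k : Type*) [CommRing k]

noncomputable def mon (p : ℕ × ℕ) : OddPoly k := X k 0 ^ p.1 * X k 1 ^ p.2

variable {k}

lemma anticomm : X k 0 * X k 1 + X k 1 * X k 0 = 0 := by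
  have h := RingQuot.mkAlgHom_rel k (OddRel.anticomm (k := k))
  simp only [map_add, map_mul, map_zero] at h
  simpa [X] using h

lemma swap1 : X k 1 * X k 0 = -(X k 0 * X k 1) :=
  eq_neg_of_add_eq_zero_right anticomm

lemma pow_swap (b : ℕ) : X k 1 ^ b * X k 0 = ((-1 : k) ^ b) • (X k 0 * X k 1 ^ b) := by
  induction b with
  | zero => simp
  | succ b ih =>
      calc X k 1 ^ (b+1) * X k 0 = X k 1 ^ b * (X k 1 * X k 0) := by
            rw [pow_succ, mul_assoc]
        _ = X k 1 ^ b * -(X k 0 * X k 1) := by rw [swap1]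
        _ = -(X k 1 ^ b * (X k 0 * X k 1)) := by exact mul_neg (X k 1 ^ b) (X k 0 * X k 1)
        _ = -(X k 1 ^ b * X k 0 * X k 1) := by rw [mul_assoc]
        _ = -(((-1 : k) ^ b • (X k 0 * X k 1 ^ b)) * X k 1) := by rw [ih]
        _ = -((-1 : k) ^ b • (X k 0 * X k 1 ^ b * X k 1)) := by rw [smul_mul_assoc]
        _ = (-(-1 : k) ^ b) • (X k 0 * X k 1 ^ b * X k 1) := (neg_smul ((-1 : k) ^ b) (X k 0 * X k 1 ^ b * X k 1)).symm
        _ = ((-1 : k) ^ (b+1)) • (X k 0 * X k 1 ^ (b+1)) := by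
            rw [pow_succ (-1 : k), mul_neg_one, pow_succ, ← mul_assoc]

lemma pow_pow_swap (b c : ℕ) :
    X k 1 ^ b * X k 0 ^ c = ((-1 : k) ^ (b * c)) • (X k 0 ^ c * X k 1 ^ b) := by
  induction c with
  | zero => simp
  | succ c ih =>
      calc X k 1 ^ b * X k 0 ^ (c+1) = (X k 1 ^ b * X k 0 ^ c) * X k 0 := by
            rw [pow_succ, mul_assoc]
        _ = ((-1 : k) ^ (b * c)) • (X k 0 ^ c * (X k 1 ^ b * X k 0)) := by
            rw [ih, smul_mul_assoc, mul_assoc]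
        _ = ((-1 : k) ^ (b * c)) • (X k 0 ^ c * ((-1 : k) ^ b • (X k 0 * X k 1 ^ b))) := by
            rw [pow_swap]
        _ = ((-1 : k) ^ (b * (c+1))) • (X k 0 ^ (c+1) * X k 1 ^ b) := by
            rw [mul_smul_comm, smul_smul, ← pow_add, ← mul_assoc, ← pow_succ,
              Nat.mul_succ]

lemma mono_mul (p q : ℕ × ℕ) :
    mon k p * mon k q = ((-1 : k) ^ (p.2 * q.1)) • mon k (p + q) := by
  show (X k 0 ^ p.1 * X k 1 ^ p.2) * (X k 0 ^ q.1 * X k 1 ^ q.2) = _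
  calc (X k 0 ^ p.1 * X k 1 ^ p.2) * (X k 0 ^ q.1 * X k 1 ^ q.2)
      = X k 0 ^ p.1 * ((X k 1 ^ p.2 * X k 0 ^ q.1) * X k 1 ^ q.2) := by
        rw [mul_assoc, mul_assoc]
    _ = ((-1 : k) ^ (p.2 * q.1)) •
          (X k 0 ^ p.1 * (X k 0 ^ q.1 * (X k 1 ^ p.2 * X k 1 ^ q.2))) := by
        rw [pow_pow_swap, smul_mul_assoc, mul_smul_comm, mul_assoc]
    _ = ((-1 : k) ^ (p.2 * q.1)) • mon k (p + q) := by
        rw [← mul_assoc, ← pow_add, ← pow_add]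
        rfl

lemma one_mem_span : (1 : OddPoly k) ∈ Submodule.span k (Set.range (mon k)) := by
  have h : mon k (0, 0) = 1 := by simp [mon]
  exact h ▸ Submodule.subset_span ⟨(0, 0), rfl⟩

lemma span_mul_closed {u v : OddPoly k}
    (hu : u ∈ Submodule.span k (Set.range (mon k)))
    (hv : v ∈ Submodule.span k (Set.range (mon k))) :
    u * v ∈ Submodule.span k (Set.range (mon k)) := by
  have h := Submodule.mul_mem_mul hu hv
  rw [Submodule.span_mul_span] at h
  refine Submodule.span_le.mpr ?_ h
  rintro x hx
  rw [Set.mem_mul] at hx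
  obtain ⟨a, ⟨p, rfl⟩, b, ⟨q, rfl⟩, rfl⟩ := hx
  rw [mono_mul]
  exact Submodule.smul_mem _ _ (Submodule.subset_span ⟨p + q, rfl⟩)

lemma mem_span_mon (z : OddPoly k) :
    z ∈ Submodule.span k (Set.range (mon k)) := by
  obtain ⟨w, rfl⟩ := RingQuot.mkAlgHom_surjective k (OddRel k) z
  induction w using FreeAlgebra.induction with
  | grade0 r =>
      rw [AlgHom.commutes, Algebra.algebraMap_eq_smul_one]
      exact Submodule.smul_mem _ _ one_mem_span
  | grade1 i =>
      show X k i ∈ _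
      fin_cases i
      · have h : mon k (1, 0) = X k 0 := by simp [mon]
        exact h ▸ Submodule.subset_span ⟨(1, 0), rfl⟩
      · have h : mon k (0, 1) = X k 1 := by simp [mon]
        exact h ▸ Submodule.subset_span ⟨(0, 1), rfl⟩
  | mul a b ha hb =>
      rw [map_mul]; exact span_mul_closed ha hb
  | add a b ha hb =>
      rw [map_add]; exact Submodule.add_mem _ ha hb

variable (k)

noncomputable def Dm : Matrix (Fin 2) (Fin 2) (MvPolynomial (Fin 2) k) :=
  !![MvPolynomial.X 0, 0; 0, -MvPolynomial.X 0]

noncomputable def Sm : Matrix (Fin 2) (Fin 2) (MvPolynomial (Fin 2) k) :=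
  !![0, MvPolynomial.X 1; MvPolynomial.X 1, 0]

noncomputable def rho : OddPoly k →ₐ[k] Matrix (Fin 2) (Fin 2) (MvPolynomial (Fin 2) k) :=
  RingQuot.liftAlgHom k ⟨FreeAlgebra.lift k ![Dm k, Sm k], by
    rintro a b ⟨⟩
    simp only [map_add, map_mul, FreeAlgebra.lift_ι_apply, map_zero,
      Matrix.cons_val_zero, Matrix.cons_val_one, Matrix.head_cons]
    ext i j
    fin_cases i <;> fin_cases j <;>
      simp [Dm, Sm, Matrix.mul_apply, Fin.sum_univ_two] <;> ring⟩

variable {k}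

lemma rho_X0 : rho k (X k 0) = Dm k := by
  rw [X, rho, RingQuot.liftAlgHom_mkAlgHom_apply, FreeAlgebra.lift_ι_apply]
  rfl

lemma rho_X1 : rho k (X k 1) = Sm k := by
  rw [X, rho, RingQuot.liftAlgHom_mkAlgHom_apply, FreeAlgebra.lift_ι_apply]
  rfl

noncomputable def ee (p : ℕ × ℕ) : Fin 2 →₀ ℕ :=
  Finsupp.single 0 p.1 + Finsupp.single 1 p.2

lemma ee_inj : Function.Injective (ee) := by
  intro p q h
  have h0 := DFunLike.congr_fun h 0
  have h1 := DFunLike.congr_fun h 1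
  simp [ee, Finsupp.single_apply] at h0 h1
  exact Prod.ext h0 h1

lemma ee_shift0 (p : ℕ × ℕ) :
    Finsupp.single (0 : Fin 2) 1 + ee p = ee (p.1 + 1, p.2) := by
  ext i
  fin_cases i <;> simp [ee, Finsupp.single_apply] <;> omega

lemma ee_shift1 (p : ℕ × ℕ) :
    Finsupp.single (1 : Fin 2) 1 + ee p = ee (p.1, p.2 + 1) := by
  ext i
  fin_cases i <;> simp [ee, Finsupp.single_apply] <;> omega

lemma Dpow (a : ℕ) :
    Dm k ^ a = !![MvPolynomial.X 0 ^ a, 0; 0, (-MvPolynomial.X 0) ^ a] := by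
  induction a with
  | zero => simp [Matrix.one_fin_two]
  | succ a ih =>
      rw [pow_succ, ih, Dm, Matrix.mul_fin_two]
      simp [pow_succ]

lemma Spow (b : ℕ) :
    Sm k ^ b = !![if Even b then MvPolynomial.X 1 ^ b else 0,
        if Even b then 0 else MvPolynomial.X 1 ^ b;
        if Even b then 0 else MvPolynomial.X 1 ^ b,
        if Even b then MvPolynomial.X 1 ^ b else 0] := by
  induction b with
  | zero => simp [Matrix.one_fin_two]
  | succ b ih =>
      rw [pow_succ, ih, Sm, Matrix.mul_fin_two]
      by_cases hb : Even b <;>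
        simp [hb, Nat.even_add_one, pow_succ]

def Wf (p : ℕ × ℕ) : Fin 2 → Fin 2 → k :=
  !![if Even p.2 then 1 else 0, if Even p.2 then 0 else 1;
     if Even p.2 then 0 else (-1 : k) ^ p.1, if Even p.2 then (-1 : k) ^ p.1 else 0]

lemma DS_entry (p : ℕ × ℕ) (i j : Fin 2) :
    (Dm k ^ p.1 * Sm k ^ p.2) i j = MvPolynomial.monomial (ee p) (Wf p i j) := by
  have hm : (MvPolynomial.X 0 ^ p.1 * MvPolynomial.X 1 ^ p.2 : MvPolynomial (Fin 2) k)
      = MvPolynomial.monomial (ee p) 1 := by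
    rw [MvPolynomial.X_pow_eq_monomial, MvPolynomial.X_pow_eq_monomial,
      MvPolynomial.monomial_mul, mul_one, ee]
  have hneg : ((-MvPolynomial.X 0 : MvPolynomial (Fin 2) k) ^ p.1
        * MvPolynomial.X 1 ^ p.2)
      = MvPolynomial.monomial (ee p) ((-1 : k) ^ p.1) := by
    have h1 : ((-MvPolynomial.X 0 : MvPolynomial (Fin 2) k) ^ p.1)
        = MvPolynomial.C ((-1 : k) ^ p.1) * MvPolynomial.X 0 ^ p.1 := by
      rw [neg_pow]
      congr 1
      simp
    rw [h1, mul_assoc, hm, MvPolynomial.C_mul_monomial, mul_one]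
  rw [Dpow, Spow, Matrix.mul_fin_two]
  fin_cases i <;> fin_cases j <;> by_cases h : Even p.2 <;>
    simp [Wf, h, hm, hneg, MvPolynomial.monomial_zero]

lemma rho_mon (p : ℕ × ℕ) : rho k (mon k p) = Dm k ^ p.1 * Sm k ^ p.2 := by
  simp [mon, map_mul, map_pow, rho_X0, rho_X1]

lemma rho_entry (c : (ℕ × ℕ) →₀ k) (i j : Fin 2) :
    rho k (c.sum fun p r => r • mon k p) i j
      = c.sum fun p r => MvPolynomial.monomial (ee p) (r * Wf p i j) := by
  classical
  rw [map_finsuppSum, Finsupp.sum, Finsupp.sum, Matrix.sum_apply]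
  refine Finset.sum_congr rfl fun p _ => ?_
  rw [map_smul, rho_mon, Matrix.smul_apply, DS_entry, MvPolynomial.smul_monomial,
    smul_eq_mul]

lemma extract (c : (ℕ × ℕ) →₀ k) (w : ℕ × ℕ → k) (φ : ℕ × ℕ → ℕ × ℕ)
    (hφ : Function.Injective φ)
    (h : (c.sum fun p r => MvPolynomial.monomial (R := k) (ee (φ p)) (r * w p)) = 0)
    (q : ℕ × ℕ) : c q * w q = 0 := by
  classical
  by_cases hq : q ∈ c.support
  · have h' := congrArg (MvPolynomial.coeff (ee (φ q))) h
    rw [Finsupp.sum, MvPolynomial.coeff_sum, MvPolynomial.coeff_zero] at h'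
    rw [Finset.sum_eq_single q ?_ ?_] at h'
    · simpa [MvPolynomial.coeff_monomial] using h'
    · intro p _ hne
      rw [MvPolynomial.coeff_monomial, if_neg]
      exact fun hEq => hne (hφ (ee_inj hEq))
    · intro hq'; exact absurd hq hq'
  · simp [Finsupp.notMem_support_iff.mp hq]

lemma two_mul_monomial (m : Fin 2 →₀ ℕ) (u : k) :
    (2 : MvPolynomial (Fin 2) k) * MvPolynomial.monomial m u
      = MvPolynomial.monomial m (2 * u) := by
  have h : (2 : MvPolynomial (Fin 2) k) = MvPolynomial.C (2 : k) :=
    (map_ofNat MvPolynomial.C 2).symm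
  rw [h, MvPolynomial.C_mul_monomial]

lemma X_mul_monomial (i : Fin 2) (m : Fin 2 →₀ ℕ) (u : k) :
    (MvPolynomial.X i : MvPolynomial (Fin 2) k) * MvPolynomial.monomial m u
      = MvPolynomial.monomial (Finsupp.single i 1 + m) u := by
  have h : (MvPolynomial.X i : MvPolynomial (Fin 2) k)
      = MvPolynomial.monomial (Finsupp.single i 1) 1 := by
    rw [← MvPolynomial.X_pow_eq_monomial, pow_one]
  rw [h, MvPolynomial.monomial_mul, one_mul]

lemma coeff_odd2 (c : (ℕ × ℕ) →₀ k) (z : OddPoly k)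
    (hc : (c.sum fun p r => r • mon k p) = z)
    (hcomm : X k 0 * z = z * X k 0) (q : ℕ × ℕ) (hq : ¬ Even q.2) :
    (2 : k) * c q = 0 := by
  have hM : rho k z * Dm k = Dm k * rho k z := by
    have h := congrArg (rho k) hcomm
    rw [map_mul, map_mul, rho_X0] at h
    exact h.symm
  have h01 : (rho k z * Dm k) 0 1 = (Dm k * rho k z) 0 1 := by rw [hM]
  rw [Matrix.mul_apply, Matrix.mul_apply, Fin.sum_univ_two] at h01
  simp [Dm] at h01
  have hA : rho k z 0 1
      = c.sum fun p r => MvPolynomial.monomial (ee p) (r * Wf p 0 1) := by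
    rw [← hc, rho_entry]
  have hkey : (2 : MvPolynomial (Fin 2) k) * (MvPolynomial.X 0 * rho k z 0 1) = 0 := by
    linear_combination (-1 : MvPolynomial (Fin 2) k) * h01
  rw [hA, Finsupp.mul_sum, Finsupp.mul_sum] at hkey
  have hkey' : (c.sum fun p r =>
      MvPolynomial.monomial (R := k) (ee (p.1 + 1, p.2)) (r * (2 * Wf p 0 1))) = 0 := by
    rw [← hkey]
    refine Finsupp.sum_congr fun p _ => ?_
    rw [X_mul_monomial, two_mul_monomial, ee_shift0, mul_left_comm]
  have hco := extract c (fun p => 2 * Wf p 0 1) (fun p => (p.1 + 1, p.2))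
    (fun p p' h => by
      simp only [Prod.mk.injEq] at h
      exact Prod.ext (by omega) h.2) hkey' q
  norm_num [Wf, hq] at hco
  linear_combination hco

lemma coeff_odd1 (c : (ℕ × ℕ) →₀ k) (z : OddPoly k)
    (hc : (c.sum fun p r => r • mon k p) = z)
    (hcomm : X k 1 * z = z * X k 1) (q : ℕ × ℕ) (hq2 : Even q.2) (hq1 : ¬ Even q.1) :
    (2 : k) * c q = 0 := by
  have hM : rho k z * Sm k = Sm k * rho k z := by
    have h := congrArg (rho k) hcomm
    rw [map_mul, map_mul, rho_X1] at h
    exact h.symm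
  have h01 : (rho k z * Sm k) 0 1 = (Sm k * rho k z) 0 1 := by rw [hM]
  rw [Matrix.mul_apply, Matrix.mul_apply, Fin.sum_univ_two] at h01
  simp [Sm] at h01
  have hA00 : rho k z 0 0
      = c.sum fun p r => MvPolynomial.monomial (ee p) (r * Wf p 0 0) := by
    rw [← hc, rho_entry]
  have hA11 : rho k z 1 1
      = c.sum fun p r => MvPolynomial.monomial (ee p) (r * Wf p 1 1) := by
    rw [← hc, rho_entry]
  have hkey : MvPolynomial.X 1 * rho k z 0 0 - MvPolynomial.X 1 * rho k z 1 1
      = (0 : MvPolynomial (Fin 2) k) := by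
    linear_combination h01
  rw [hA00, hA11, Finsupp.mul_sum, Finsupp.mul_sum, ← Finsupp.sum_sub] at hkey
  have hkey' : (c.sum fun p r =>
      MvPolynomial.monomial (R := k) (ee (p.1, p.2 + 1)) (r * (Wf p 0 0 - Wf p 1 1))) = 0 := by
    rw [← hkey]
    refine Finsupp.sum_congr fun p _ => ?_
    rw [X_mul_monomial, X_mul_monomial, ← map_sub, ee_shift1, mul_sub]
  have hco := extract c (fun p => Wf p 0 0 - Wf p 1 1) (fun p => (p.1, p.2 + 1))
    (fun p p' h => by
      simp only [Prod.mk.injEq] at h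
      exact Prod.ext h.1 (by omega)) hkey' q
  have hodd : (-1 : k) ^ q.1 = -1 := Odd.neg_one_pow (Nat.not_even_iff_odd.mp hq1)
  norm_num [Wf, hq2, hodd] at hco
  linear_combination hco

lemma mon_comm_X0sq (p : ℕ × ℕ) : mon k p * X k 0 ^ 2 = X k 0 ^ 2 * mon k p := by
  have h20 : mon k (2, 0) = X k 0 ^ 2 := by simp [mon]
  rw [← h20, mono_mul, mono_mul, add_comm p (2, 0)]
  have e1 : ((-1 : k) ^ (p.2 * ((2, 0) : ℕ × ℕ).1)) = 1 := by
    rw [show ((2, 0) : ℕ × ℕ).1 = 2 from rfl, mul_comm, pow_mul, neg_one_sq, one_pow]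
  have e2 : ((-1 : k) ^ (((2, 0) : ℕ × ℕ).2 * p.1)) = 1 := by
    rw [show ((2, 0) : ℕ × ℕ).2 = 0 from rfl, zero_mul, pow_zero]
  rw [e1, e2]

lemma mon_comm_X1sq (p : ℕ × ℕ) : mon k p * X k 1 ^ 2 = X k 1 ^ 2 * mon k p := by
  have h02 : mon k (0, 2) = X k 1 ^ 2 := by simp [mon]
  rw [← h02, mono_mul, mono_mul, add_comm p (0, 2)]
  have e1 : ((-1 : k) ^ (p.2 * ((0, 2) : ℕ × ℕ).1)) = 1 := by
    rw [show ((0, 2) : ℕ × ℕ).1 = 0 from rfl, mul_zero, pow_zero]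
  have e2 : ((-1 : k) ^ (((0, 2) : ℕ × ℕ).2 * p.1)) = 1 := by
    rw [show ((0, 2) : ℕ × ℕ).2 = 2 from rfl, pow_mul, neg_one_sq, one_pow]
  rw [e1, e2]

lemma central_of_mon_comm {g : OddPoly k} (hg : ∀ p, mon k p * g = g * mon k p) :
    g ∈ Subalgebra.center k (OddPoly k) := by
  rw [Subalgebra.mem_center_iff]
  intro b
  have hb := mem_span_mon b
  induction hb using Submodule.span_induction with
  | mem x hx => obtain ⟨p, rfl⟩ := hx; exact hg p
  | zero => rw [zero_mul, mul_zero]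
  | add x y _ _ hx hy => rw [add_mul, mul_add, hx, hy]
  | smul r x _ hx => rw [smul_mul_assoc, mul_smul_comm, hx]

end OddAux

/-- If `2` is a non-zero-divisor in `k`, the center of `R` equals the
`k`-subalgebra generated by `x₁²` and `x₂²`. -/
theorem stmt9 (k : Type*) [CommRing k]
    (h2 : ∀ a : k, 2 * a = 0 → a = 0) :
    Subalgebra.center k (OddPoly k) =
      Algebra.adjoin k ({X k 0 ^ 2, X k 1 ^ 2} : Set (OddPoly k)) := by
  apply le_antisymm
  · intro z hz
    have hz' := Subalgebra.mem_center_iff.mp hz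
    obtain ⟨c, hc⟩ :=
      Finsupp.mem_span_range_iff_exists_finsupp.mp (OddAux.mem_span_mon z)
    have hodd2 : ∀ q : ℕ × ℕ, ¬ Even q.2 → c q = 0 := fun q hq =>
      h2 _ (OddAux.coeff_odd2 c z hc (hz' (X k 0)) q hq)
    have hodd1 : ∀ q : ℕ × ℕ, Even q.2 → ¬ Even q.1 → c q = 0 := fun q hq2 hq1 =>
      h2 _ (OddAux.coeff_odd1 c z hc (hz' (X k 1)) q hq2 hq1)
    rw [← hc, Finsupp.sum]
    refine Subalgebra.sum_mem _ fun p _ => ?_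
    by_cases hp2 : Even p.2
    · by_cases hp1 : Even p.1
      · obtain ⟨i, hi⟩ := hp1
        obtain ⟨j, hj⟩ := hp2
        refine Subalgebra.smul_mem _ ?_ _
        have hmon : OddAux.mon k p = (X k 0 ^ 2) ^ i * (X k 1 ^ 2) ^ j := by
          show X k 0 ^ p.1 * X k 1 ^ p.2 = _
          rw [hi, hj, ← pow_mul, ← pow_mul, two_mul, two_mul]
        rw [hmon]
        refine mul_mem (pow_mem (Algebra.subset_adjoin ?_) i)
          (pow_mem (Algebra.subset_adjoin ?_) j)
        · exact Set.mem_insert _ _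
        · exact Set.mem_insert_of_mem _ rfl
      · rw [hodd1 p hp2 hp1, zero_smul]; exact zero_mem _
    · rw [hodd2 p hp2, zero_smul]; exact zero_mem _
  · rw [Algebra.adjoin_le_iff]
    rintro x (rfl | rfl)
    · exact OddAux.central_of_mon_comm (fun p => OddAux.mon_comm_X0sq p)
    · exact OddAux.central_of_mon_comm (fun p => OddAux.mon_comm_X1sq p)
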